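/- Necessary condition for boundary exact controllability with density control: if (ρ, u, S) solves the linearized system ∂_t ρ + u_s ∂_x ρ + ρ_s ∂_x u = 0, ∂_t u + u_s ∂_x u + b ∂_x ρ - (1/ρ_s) ∂_x S = 0, ∂_t S + S/κ - (μ/κ) ∂_x u = 0 on (0,T)×(0,2π) with boundary conditions ρ(t,0) = ρ(t,2π) + q(t), u(t,0) = u(t,2π), S(t,0) = S(t,2π), and (ρ,u,S)(T,·) = (0,0,0), then b ∫_0^{2π} ρ_0 dx = u_s ∫_0^{2π} u_0 dx and ∫_0^{2π} S_0 dx = 0. -/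

import Mathlib

open MeasureTheory intervalIntegral Set
open scoped Interval
set_option maxHeartbeats 1000000

lemma pt_hasDerivAt {f : ℝ → ℝ → ℝ} (hf : ContDiff ℝ 1 (Function.uncurry f)) (t x : ℝ) :
    HasDerivAt (fun s => f s x) (fderiv ℝ (Function.uncurry f) (t, x) (1, 0)) t := by
  have h := (hf.differentiable one_ne_zero (t, x)).hasFDerivAt
  have hin : HasDerivAt (fun s : ℝ => (s, x)) ((1 : ℝ), (0 : ℝ)) t :=
    (hasDerivAt_id t).prodMk (hasDerivAt_const t x)
  exact h.comp_hasDerivAt t hin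

lemma px_hasDerivAt {f : ℝ → ℝ → ℝ} (hf : ContDiff ℝ 1 (Function.uncurry f)) (t x : ℝ) :
    HasDerivAt (fun y => f t y) (fderiv ℝ (Function.uncurry f) (t, x) (0, 1)) x := by
  have h := (hf.differentiable one_ne_zero (t, x)).hasFDerivAt
  have hin : HasDerivAt (fun y : ℝ => (t, y)) ((0 : ℝ), (1 : ℝ)) x :=
    (hasDerivAt_const x t).prodMk (hasDerivAt_id x)
  exact h.comp_hasDerivAt x hin

lemma hasDerivAt_II {f : ℝ → ℝ → ℝ} (hf : ContDiff ℝ 1 (Function.uncurry f)) (t₀ : ℝ) :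
    HasDerivAt (fun t => ∫ x in (0:ℝ)..(2*Real.pi), f t x)
      (∫ x in (0:ℝ)..(2*Real.pi), deriv (fun s => f s x) t₀) t₀ := by
  set g : ℝ × ℝ → ℝ := fun p => fderiv ℝ (Function.uncurry f) p (1, 0) with hg
  have hgc : Continuous g := (hf.continuous_fderiv one_ne_zero).clm_apply continuous_const
  have hK : IsCompact ((Icc (t₀ - 1) (t₀ + 1)) ×ˢ (uIcc (0:ℝ) (2*Real.pi))) :=
    isCompact_Icc.prod isCompact_uIcc
  obtain ⟨C, hC⟩ := hK.exists_bound_of_continuousOn hgc.continuousOn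
  have hmeas : ∀ᶠ t in nhds t₀,
      AEStronglyMeasurable (f t) (volume.restrict (Ι (0:ℝ) (2*Real.pi))) := by
    filter_upwards with t
    exact (hf.continuous.comp (Continuous.prodMk_right t)).aestronglyMeasurable
  have hint : IntervalIntegrable (f t₀) volume 0 (2*Real.pi) :=
    (hf.continuous.comp (Continuous.prodMk_right t₀)).intervalIntegrable 0 (2*Real.pi)
  have h'meas : AEStronglyMeasurable (fun x => g (t₀, x))
      (volume.restrict (Ι (0:ℝ) (2*Real.pi))) :=
    (hgc.comp (Continuous.prodMk_right t₀)).aestronglyMeasurable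
  have hbound : ∀ᵐ x : ℝ ∂volume, x ∈ Ι (0:ℝ) (2*Real.pi) →
      ∀ t ∈ Metric.ball t₀ 1, ‖g (t, x)‖ ≤ C := by
    filter_upwards with x hx t ht
    have h1 := abs_le.1 (le_of_lt (mem_ball_iff_norm.1 ht))
    exact hC (t, x) ⟨⟨by linarith [h1.1], by linarith [h1.2]⟩, uIoc_subset_uIcc hx⟩
  have hdiff : ∀ᵐ x : ℝ ∂volume, x ∈ Ι (0:ℝ) (2*Real.pi) →
      ∀ t ∈ Metric.ball t₀ 1, HasDerivAt (fun t => f t x) (g (t, x)) t := by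
    filter_upwards with x _ t _
    exact pt_hasDerivAt hf t x
  have key := (intervalIntegral.hasDerivAt_integral_of_dominated_loc_of_deriv_le (Metric.ball_mem_nhds t₀ one_pos)
    hmeas hint h'meas hbound intervalIntegrable_const hdiff).2
  have he : ∀ x, g (t₀, x) = deriv (fun s => f s x) t₀ :=
    fun x => ((pt_hasDerivAt hf t₀ x).deriv).symm
  simpa [he] using key

lemma integral_px {f : ℝ → ℝ → ℝ} (hf : ContDiff ℝ 1 (Function.uncurry f)) (t : ℝ) :
    ∫ x in (0:ℝ)..(2*Real.pi), deriv (fun y => f t y) x = f t (2*Real.pi) - f t 0 := by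
  apply intervalIntegral.integral_deriv_eq_sub
  · exact fun x _ => (px_hasDerivAt hf t x).differentiableAt
  · have : (deriv fun y => f t y) = fun x => fderiv ℝ (Function.uncurry f) (t, x) (0, 1) :=
      funext fun x => (px_hasDerivAt hf t x).deriv
    rw [this]
    exact (((hf.continuous_fderiv one_ne_zero).clm_apply continuous_const).comp
      (Continuous.prodMk_right t)).intervalIntegrable 0 (2*Real.pi)

lemma const_of_deriv_zero {f : ℝ → ℝ} {T : ℝ} (hT : 0 < T) (hc : ContinuousOn f (Icc 0 T))
    (hd : ∀ t ∈ Ioo 0 T, HasDerivAt f 0 t) : f 0 = f T := by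
  have hdiff : DifferentiableOn ℝ f (interior (Icc (0:ℝ) T)) := by
    rw [interior_Icc]; exact fun t ht => (hd t ht).differentiableAt.differentiableWithinAt
  have hd0 : ∀ t ∈ interior (Icc (0:ℝ) T), deriv f t = 0 := by
    rw [interior_Icc]; exact fun t ht => (hd t ht).deriv
  have hmono : MonotoneOn f (Icc 0 T) :=
    monotoneOn_of_deriv_nonneg (convex_Icc 0 T) hc hdiff (fun t ht => (hd0 t ht).ge)
  have hanti : AntitoneOn f (Icc 0 T) :=
    antitoneOn_of_deriv_nonpos (convex_Icc 0 T) hc hdiff (fun t ht => (hd0 t ht).le)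
  have h0 : (0:ℝ) ∈ Icc (0:ℝ) T := ⟨le_rfl, hT.le⟩
  have h1 : T ∈ Icc (0:ℝ) T := ⟨hT.le, le_rfl⟩
  exact le_antisymm (hmono h0 h1 hT.le) (hanti h0 h1 hT.le)

lemma cont_px {f : ℝ → ℝ → ℝ} (hf : ContDiff ℝ 1 (Function.uncurry f)) (t : ℝ) :
    Continuous (fun x => deriv (fun y => f t y) x) := by
  have : (fun x => deriv (fun y => f t y) x)
      = fun x => fderiv ℝ (Function.uncurry f) (t, x) (0, 1) :=
    funext fun x => (px_hasDerivAt hf t x).deriv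
  rw [this]
  exact ((hf.continuous_fderiv one_ne_zero).clm_apply continuous_const).comp (Continuous.prodMk_right t)

/-- Necessary condition for boundary exact controllability with density control:
if a (continuously differentiable) solution of the linearized compressible
Navier–Stokes–Maxwell system with boundary control `q` in the density reaches zero at
time `T`, then `b ∫ ρ₀ = u_s ∫ u₀` and `∫ S₀ = 0`. -/
theorem stmt_18 (us ρs b μ κ T : ℝ) (hus : 0 < us) (hρs : 0 < ρs) (hb : 0 < b)
    (hμ : 0 < μ) (hκ : 0 < κ) (hT : 0 < T)
    (ρ u S : ℝ → ℝ → ℝ) (q : ℝ → ℝ)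
    (hρ : ContDiff ℝ 1 (Function.uncurry ρ))
    (hu : ContDiff ℝ 1 (Function.uncurry u))
    (hS : ContDiff ℝ 1 (Function.uncurry S))
    (heq1 : ∀ t ∈ Set.Ioo 0 T, ∀ x ∈ Set.Ioo 0 (2*Real.pi),
      deriv (fun s => ρ s x) t + us * deriv (fun y => ρ t y) x
        + ρs * deriv (fun y => u t y) x = 0)
    (heq2 : ∀ t ∈ Set.Ioo 0 T, ∀ x ∈ Set.Ioo 0 (2*Real.pi),
      deriv (fun s => u s x) t + us * deriv (fun y => u t y) x
        + b * deriv (fun y => ρ t y) x - (1/ρs) * deriv (fun y => S t y) x = 0)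
    (heq3 : ∀ t ∈ Set.Ioo 0 T, ∀ x ∈ Set.Ioo 0 (2*Real.pi),
      deriv (fun s => S s x) t + S t x / κ - (μ/κ) * deriv (fun y => u t y) x = 0)
    (hbdρ : ∀ t ∈ Set.Ioo 0 T, ρ t 0 = ρ t (2*Real.pi) + q t)
    (hbdu : ∀ t ∈ Set.Ioo 0 T, u t 0 = u t (2*Real.pi))
    (hbdS : ∀ t ∈ Set.Ioo 0 T, S t 0 = S t (2*Real.pi))
    (hfinal : ∀ x ∈ Set.Icc 0 (2*Real.pi), ρ T x = 0 ∧ u T x = 0 ∧ S T x = 0) :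
    b * (∫ x in (0:ℝ)..(2*Real.pi), ρ 0 x) = us * (∫ x in (0:ℝ)..(2*Real.pi), u 0 x) ∧
    (∫ x in (0:ℝ)..(2*Real.pi), S 0 x) = 0 := by
  have hpi : (0:ℝ) ≤ 2*Real.pi := by positivity
  set Iρ : ℝ → ℝ := fun t => ∫ x in (0:ℝ)..(2*Real.pi), ρ t x with hIρ
  set Iu : ℝ → ℝ := fun t => ∫ x in (0:ℝ)..(2*Real.pi), u t x with hIu
  set IS : ℝ → ℝ := fun t => ∫ x in (0:ℝ)..(2*Real.pi), S t x with hIS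
  have ae_Ioo : ∀ᵐ x : ℝ ∂volume, x ∈ Ι (0:ℝ) (2*Real.pi) → x ∈ Ioo (0:ℝ) (2*Real.pi) := by
    have hne : ∀ᵐ x : ℝ ∂volume, x ≠ 2*Real.pi := by
      rw [ae_iff]; simpa using Real.volume_singleton
    filter_upwards [hne] with x hx hmem
    rw [uIoc_of_le hpi] at hmem
    exact ⟨hmem.1, lt_of_le_of_ne hmem.2 hx⟩
  have iρx := fun t => (cont_px hρ t).intervalIntegrable (μ := volume) 0 (2*Real.pi)
  have iux := fun t => (cont_px hu t).intervalIntegrable (μ := volume) 0 (2*Real.pi)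
  have iSx := fun t => (cont_px hS t).intervalIntegrable (μ := volume) 0 (2*Real.pi)
  have iS : ∀ t, IntervalIntegrable (fun x => S t x) volume 0 (2*Real.pi) := fun t =>
    ((hS.continuous.comp (Continuous.prodMk_right t) : Continuous fun x => S t x)).intervalIntegrable
      0 (2*Real.pi)
  have Dρ : ∀ t ∈ Ioo 0 T, HasDerivAt Iρ (us * q t) t := by
    intro t ht
    have heqI : (∫ x in (0:ℝ)..(2*Real.pi), deriv (fun s => ρ s x) t) = us * q t := by
      have h1 : (∫ x in (0:ℝ)..(2*Real.pi), deriv (fun s => ρ s x) t)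
          = ∫ x in (0:ℝ)..(2*Real.pi),
              ((-us) * deriv (fun y => ρ t y) x + (-ρs) * deriv (fun y => u t y) x) := by
        apply intervalIntegral.integral_congr_ae
        filter_upwards [ae_Ioo] with x hx hmem
        have := heq1 t ht x (hx hmem); linarith
      rw [h1, intervalIntegral.integral_add ((iρx t).const_mul (-us)) ((iux t).const_mul (-ρs)),
        intervalIntegral.integral_const_mul, intervalIntegral.integral_const_mul,
        integral_px hρ, integral_px hu, hbdρ t ht, hbdu t ht]
      ring
    exact heqI ▸ hasDerivAt_II hρ t
  have Du : ∀ t ∈ Ioo 0 T, HasDerivAt Iu (b * q t) t := by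
    intro t ht
    have heqI : (∫ x in (0:ℝ)..(2*Real.pi), deriv (fun s => u s x) t) = b * q t := by
      have h1 : (∫ x in (0:ℝ)..(2*Real.pi), deriv (fun s => u s x) t)
          = ∫ x in (0:ℝ)..(2*Real.pi),
              ((1/ρs) * deriv (fun y => S t y) x + (-us) * deriv (fun y => u t y) x
                + (-b) * deriv (fun y => ρ t y) x) := by
        apply intervalIntegral.integral_congr_ae
        filter_upwards [ae_Ioo] with x hx hmem
        have := heq2 t ht x (hx hmem); linarith
      rw [h1, intervalIntegral.integral_add
          (((iSx t).const_mul (1/ρs)).add ((iux t).const_mul (-us))) ((iρx t).const_mul (-b)),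
        intervalIntegral.integral_add ((iSx t).const_mul (1/ρs)) ((iux t).const_mul (-us)),
        intervalIntegral.integral_const_mul, intervalIntegral.integral_const_mul,
        intervalIntegral.integral_const_mul, integral_px hρ, integral_px hu, integral_px hS,
        hbdρ t ht, hbdu t ht, hbdS t ht]
      ring
    exact heqI ▸ hasDerivAt_II hu t
  have DS : ∀ t ∈ Ioo 0 T, HasDerivAt IS (-IS t / κ) t := by
    intro t ht
    have heqI : (∫ x in (0:ℝ)..(2*Real.pi), deriv (fun s => S s x) t) = -IS t / κ := by
      have h1 : (∫ x in (0:ℝ)..(2*Real.pi), deriv (fun s => S s x) t)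
          = ∫ x in (0:ℝ)..(2*Real.pi),
              ((μ/κ) * deriv (fun y => u t y) x - S t x / κ) := by
        apply intervalIntegral.integral_congr_ae
        filter_upwards [ae_Ioo] with x hx hmem
        have := heq3 t ht x (hx hmem); linarith
      rw [h1, intervalIntegral.integral_sub ((iux t).const_mul (μ/κ)) ((iS t).div_const κ),
        intervalIntegral.integral_const_mul, intervalIntegral.integral_div, integral_px hu,
        hbdu t ht]
      simp only [hIS]; ring
    exact heqI ▸ hasDerivAt_II hS t
  have cIρ : Continuous Iρ := by
    have hd : Differentiable ℝ Iρ := fun t => (hasDerivAt_II hρ t).differentiableAt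
    exact hd.continuous
  have cIu : Continuous Iu := by
    have hd : Differentiable ℝ Iu := fun t => (hasDerivAt_II hu t).differentiableAt
    exact hd.continuous
  have cIS : Continuous IS := by
    have hd : Differentiable ℝ IS := fun t => (hasDerivAt_II hS t).differentiableAt
    exact hd.continuous
  have hIρT : Iρ T = 0 := by
    have h : EqOn (ρ T) (fun _ => (0:ℝ)) (uIcc (0:ℝ) (2*Real.pi)) := fun x hx =>
      (hfinal x (by rwa [uIcc_of_le hpi] at hx)).1
    simp only [hIρ]; simp [intervalIntegral.integral_congr h]
  have hIuT : Iu T = 0 := by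
    have h : EqOn (u T) (fun _ => (0:ℝ)) (uIcc (0:ℝ) (2*Real.pi)) := fun x hx =>
      (hfinal x (by rwa [uIcc_of_le hpi] at hx)).2.1
    simp only [hIu]; simp [intervalIntegral.integral_congr h]
  have hIST : IS T = 0 := by
    have h : EqOn (S T) (fun _ => (0:ℝ)) (uIcc (0:ℝ) (2*Real.pi)) := fun x hx =>
      (hfinal x (by rwa [uIcc_of_le hpi] at hx)).2.2
    simp only [hIS]; simp [intervalIntegral.integral_congr h]
  have hP : b * Iρ 0 - us * Iu 0 = b * Iρ T - us * Iu T := by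
    have := const_of_deriv_zero (f := fun t => b * Iρ t - us * Iu t) hT
      (((continuous_const.mul cIρ).sub (continuous_const.mul cIu)).continuousOn)
      (fun t ht => by
        have h : HasDerivAt (fun t => b * Iρ t - us * Iu t) (b * (us * q t) - us * (b * q t)) t :=
          ((Dρ t ht).const_mul b).sub ((Du t ht).const_mul us)
        convert h using 1; ring)
    simpa using this
  have hQ : Real.exp ((0:ℝ)/κ) * IS 0 = Real.exp (T/κ) * IS T := by
    have := const_of_deriv_zero (f := fun t => Real.exp (t/κ) * IS t) hT
      (((Real.continuous_exp.comp (continuous_id.div_const κ)).mul cIS).continuousOn)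
      (fun t ht => by
        have hexp : HasDerivAt (fun t : ℝ => Real.exp (t/κ)) (Real.exp (t/κ) * (1/κ)) t := by
          have h1 : HasDerivAt (fun t : ℝ => t/κ) (1/κ) t := (hasDerivAt_id t).div_const κ
          simpa [Function.comp_def] using (Real.hasDerivAt_exp (t/κ)).comp t h1
        have h : HasDerivAt (fun t => Real.exp (t/κ) * IS t)
            (Real.exp (t/κ) * (1/κ) * IS t + Real.exp (t/κ) * (-IS t / κ)) t := hexp.mul (DS t ht)
        convert h using 1
        field_simp
        ring)
    simpa using this
  rw [hIρT, hIuT, mul_zero, mul_zero, sub_zero] at hP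
  rw [hIST, mul_zero] at hQ
  constructor
  · simp only [hIρ, hIu] at hP
    linarith
  · have h0 : Real.exp ((0:ℝ)/κ) = 1 := by simp
    rw [h0, one_mul] at hQ
    simpa only [hIS] using hQ
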